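/- Let F be a continuous CDF on [0, ∞), k_min ≤ K, p ∈ (0,1) and c_nz = (Σ_{n=k_min}^{K} C(K,n) p^n(1−p)^{K−n})^{-1}. For k ≤ k_min, define G_k(x) = Σ_{n=k_min}^{K} Σ_{ℓ=k}^{n} C(n,ℓ) C(K,n) c_nz p^n (1−p)^{K−n} F(x)^ℓ (1−F(x))^{n−ℓ}. Then G_k is a CDF (nondecreasing, right-continuous, with limits 0 at −∞ and 1 at +∞), and G_k(x) ≥ G_{k+1}(x) for all x and all k < k_min, i.e., higher-order statistics stochastically dominate lower ones. -/

import Mathlib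

open Filter


/-- Tail of the binomial CDF: `Σ_{ℓ=k}^n C(n,ℓ) t^ℓ (1-t)^{n-ℓ}`. -/
noncomputable def hfun (n k : ℕ) (t : ℝ) : ℝ :=
  ∑ l ∈ Finset.Icc k n, (n.choose l : ℝ) * t ^ l * (1 - t) ^ (n - l)

lemma hfun_continuous (n k : ℕ) : Continuous (hfun n k) := by
  unfold hfun
  exact continuous_finset_sum _ fun l _ =>
    ((continuous_const.mul (continuous_pow l)).mul
      ((continuous_const.sub continuous_id).pow _))

lemma telescope (A : ℕ → ℝ) : ∀ n k : ℕ, k ≤ n →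
    ∑ l ∈ Finset.Icc k n, (A l - A (l + 1)) = A k - A (n + 1) := by
  intro n
  induction n with
  | zero =>
    intro k hk
    have : k = 0 := by omega
    subst this
    simp
  | succ m ih =>
    intro k hk
    rcases Nat.lt_or_ge k (m + 1) with h | h
    · rw [Finset.sum_Icc_succ_top (by omega), ih k (by omega)]
      ring
    · have : k = m + 1 := by omega
      subst this
      simp

lemma term_hasDerivAt (n l : ℕ) (hl1 : 1 ≤ l) (hln : l ≤ n) (t : ℝ) :
    HasDerivAt (fun t : ℝ => (n.choose l : ℝ) * t ^ l * (1 - t) ^ (n - l))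
      ((n : ℝ) * ((n - 1).choose (l - 1) : ℝ) * t ^ (l - 1) * (1 - t) ^ (n - l)
        - (n : ℝ) * ((n - 1).choose l : ℝ) * t ^ l * (1 - t) ^ (n - l - 1)) t := by
  have h1 : HasDerivAt (fun t : ℝ => t ^ l) ((l : ℝ) * t ^ (l - 1)) t := hasDerivAt_pow l t
  have h2 : HasDerivAt (fun t : ℝ => (1 - t) ^ (n - l))
      ((((n - l : ℕ)) : ℝ) * (1 - t) ^ (n - l - 1) * (-1)) t := by
    have h := ((hasDerivAt_id t).const_sub 1).pow (n - l)
    simp only [Pi.pow_def] at h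
    simpa using h
  have h3 := (h1.mul h2).const_mul ((n.choose l : ℝ))
  have e1n : n.choose l * l = n * ((n - 1).choose (l - 1)) := by
    obtain ⟨m, rfl⟩ : ∃ m, n = m + 1 := ⟨n - 1, by omega⟩
    obtain ⟨j, rfl⟩ : ∃ j, l = j + 1 := ⟨l - 1, by omega⟩
    simpa [Nat.succ_sub_one, mul_comm] using (Nat.add_one_mul_choose_eq m j).symm
  have e2n : n.choose l * (n - l) = n * ((n - 1).choose l) := by
    obtain ⟨m, rfl⟩ : ∃ m, n = m + 1 := ⟨n - 1, by omega⟩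
    simpa [Nat.succ_sub_one, mul_comm] using (Nat.choose_mul_succ_eq m l).symm
  have E1 : ((n.choose l : ℝ)) * (l : ℝ) = (n : ℝ) * ((n - 1).choose (l - 1) : ℝ) := by
    exact_mod_cast e1n
  have E2 : ((n.choose l : ℝ)) * (((n - l : ℕ)) : ℝ) = (n : ℝ) * ((n - 1).choose l : ℝ) := by
    exact_mod_cast e2n
  simp only [Pi.mul_def] at h3
  convert h3 using 1
  · rfl
  · rfl
  · ext s; ring
  · linarith [congrArg (· * (t ^ (l - 1) * (1 - t) ^ (n - l))) E1,
      congrArg (· * (t ^ l * (1 - t) ^ (n - l - 1))) E2]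

lemma hfun_hasDerivAt (n k : ℕ) (hk1 : 1 ≤ k) (hkn : k ≤ n) (t : ℝ) :
    HasDerivAt (hfun n k)
      ((n : ℝ) * ((n - 1).choose (k - 1) : ℝ) * t ^ (k - 1) * (1 - t) ^ (n - k)) t := by
  set A : ℕ → ℝ := fun l => (n : ℝ) * ((n - 1).choose (l - 1) : ℝ) * t ^ (l - 1) * (1 - t) ^ (n - l)
    with hA
  have hsum : HasDerivAt (hfun n k) (∑ l ∈ Finset.Icc k n, (A l - A (l + 1))) t := by
    unfold hfun
    apply HasDerivAt.fun_sum
    intro l hl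
    rw [Finset.mem_Icc] at hl
    have := term_hasDerivAt n l (le_trans hk1 hl.1) hl.2 t
    simpa [hA, Nat.add_sub_cancel, Nat.sub_sub] using this
  have htel : ∑ l ∈ Finset.Icc k n, (A l - A (l + 1)) = A k := by
    rw [telescope A n k hkn]
    have : A (n + 1) = 0 := by
      simp only [hA]
      have hz : (n - 1).choose (n + 1 - 1) = 0 :=
        Nat.choose_eq_zero_of_lt (by omega)
      rw [hz]
      simp
    rw [this, sub_zero]
  rw [htel] at hsum
  exact hsum

lemma hfun_monotoneOn (n k : ℕ) (hk1 : 1 ≤ k) : MonotoneOn (hfun n k) (Set.Icc 0 1) := by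
  by_cases hkn : k ≤ n
  · apply monotoneOn_of_deriv_nonneg (convex_Icc 0 1) (hfun_continuous n k).continuousOn
    · intro t _
      exact (hfun_hasDerivAt n k hk1 hkn t).differentiableAt.differentiableWithinAt
    · intro t ht
      rw [interior_Icc] at ht
      rw [(hfun_hasDerivAt n k hk1 hkn t).deriv]
      have h1 : (0:ℝ) ≤ t := ht.1.le
      have h2 : (0:ℝ) ≤ 1 - t := by linarith [ht.2]
      positivity
  · intro a _ b _ _
    simp [hfun, Finset.Icc_eq_empty (by omega : ¬ k ≤ n)]

lemma hfun_zero (n k : ℕ) (hk1 : 1 ≤ k) : hfun n k 0 = 0 := by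
  apply Finset.sum_eq_zero
  intro l hl
  rw [Finset.mem_Icc] at hl
  rw [zero_pow (by omega : l ≠ 0)]
  ring

lemma hfun_one (n k : ℕ) (hkn : k ≤ n) : hfun n k 1 = 1 := by
  unfold hfun
  rw [Finset.sum_eq_single n]
  · simp
  · intro l hl hln
    rw [Finset.mem_Icc] at hl
    rw [sub_self, zero_pow (by omega : n - l ≠ 0)]
    ring
  · intro h
    exact absurd (Finset.mem_Icc.mpr ⟨hkn, le_refl n⟩) h

lemma hfun_succ_le (n k : ℕ) {t : ℝ} (ht : t ∈ Set.Icc (0:ℝ) 1) :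
    hfun n (k + 1) t ≤ hfun n k t := by
  apply Finset.sum_le_sum_of_subset_of_nonneg
  · apply Finset.Icc_subset_Icc_left; omega
  · intro l _ _
    have h1 : (0:ℝ) ≤ t := ht.1
    have h2 : (0:ℝ) ≤ 1 - t := by linarith [ht.2]
    positivity

/-- The mixed order-statistic CDF
G_k(x) = Σ_{n=k_min}^{K} Σ_{ℓ=k}^{n} C(n,ℓ)C(K,n) c_nz pⁿ(1−p)^{K−n} F(x)^ℓ(1−F(x))^{n−ℓ}
(for 1 ≤ k ≤ k_min, with F a continuous CDF) is itself a CDF (nondecreasing,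
right-continuous, limit 0 at −∞ and 1 at +∞), and G_k(x) ≥ G_{k+1}(x) for all x
and k < k_min. -/
theorem order_statistic_mixture_cdf (K kmin : ℕ) (p : ℝ) (hp : 0 < p) (hp1 : p < 1)
    (hkmin : kmin ≤ K) (hkmin1 : 1 ≤ kmin)
    (F : ℝ → ℝ) (hFcont : Continuous F) (hFmono : Monotone F)
    (hF01 : ∀ x, F x ∈ Set.Icc (0 : ℝ) 1)
    (hFbot : Tendsto F atBot (nhds 0)) (hFtop : Tendsto F atTop (nhds 1))
    (hFsupp : ∀ x < (0 : ℝ), F x = 0)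
    (cnz : ℝ)
    (hcnz : cnz = (∑ n ∈ Finset.Icc kmin K, (K.choose n : ℝ) * p ^ n * (1 - p) ^ (K - n))⁻¹)
    (G : ℕ → ℝ → ℝ)
    (hG : ∀ k x, G k x = ∑ n ∈ Finset.Icc kmin K, ∑ l ∈ Finset.Icc k n,
      (n.choose l : ℝ) * (K.choose n : ℝ) * cnz * p ^ n * (1 - p) ^ (K - n) *
        (F x) ^ l * (1 - F x) ^ (n - l)) :
    ∀ k : ℕ, 1 ≤ k → k ≤ kmin →
      (Monotone (G k) ∧
       (∀ x : ℝ, ContinuousWithinAt (G k) (Set.Ici x) x) ∧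
       Tendsto (G k) atBot (nhds 0) ∧
       Tendsto (G k) atTop (nhds 1) ∧
       (k < kmin → ∀ x : ℝ, G (k + 1) x ≤ G k x)) := by
  intro k hk1 hkkmin
  have hp' : (0:ℝ) < 1 - p := by linarith
  set w : ℕ → ℝ := fun n => (K.choose n : ℝ) * cnz * p ^ n * (1 - p) ^ (K - n) with hw
  have hS : 0 < ∑ n ∈ Finset.Icc kmin K, (K.choose n : ℝ) * p ^ n * (1 - p) ^ (K - n) := by
    apply Finset.sum_pos'
    · intro i _; positivity
    · refine ⟨kmin, Finset.mem_Icc.mpr ⟨le_refl _, hkmin⟩, ?_⟩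
      have h1 : (0:ℝ) < K.choose kmin := by exact_mod_cast Nat.choose_pos hkmin
      positivity
  have hcnz0 : 0 ≤ cnz := hcnz ▸ inv_nonneg.mpr hS.le
  have hwnn : ∀ n, 0 ≤ w n := by
    intro n
    exact mul_nonneg (mul_nonneg (mul_nonneg (Nat.cast_nonneg _) hcnz0) (by positivity))
      (by positivity)
  have hwsum : ∑ n ∈ Finset.Icc kmin K, w n = 1 := by
    have h : ∑ n ∈ Finset.Icc kmin K, w n
        = cnz * ∑ n ∈ Finset.Icc kmin K, (K.choose n : ℝ) * p ^ n * (1 - p) ^ (K - n) := by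
      rw [Finset.mul_sum]
      exact Finset.sum_congr rfl fun n _ => by simp only [hw]; ring
    rw [h, hcnz, inv_mul_cancel₀ hS.ne']
  have hGh : ∀ j x, G j x = ∑ n ∈ Finset.Icc kmin K, w n * hfun n j (F x) := by
    intro j x
    rw [hG]
    refine Finset.sum_congr rfl fun n _ => ?_
    unfold hfun
    rw [Finset.mul_sum]
    exact Finset.sum_congr rfl fun l _ => by simp only [hw]; ring
  have hout : Continuous (fun t => ∑ n ∈ Finset.Icc kmin K, w n * hfun n k t) :=
    continuous_finset_sum _ fun n _ => continuous_const.mul (hfun_continuous n k)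
  have hGk : G k = fun x => ∑ n ∈ Finset.Icc kmin K, w n * hfun n k (F x) := funext (hGh k)
  refine ⟨?_, ?_, ?_, ?_, ?_⟩
  · intro x y hxy
    rw [hGh, hGh]
    refine Finset.sum_le_sum fun n _ => ?_
    exact mul_le_mul_of_nonneg_left
      ((hfun_monotoneOn n k hk1) (hF01 x) (hF01 y) (hFmono hxy)) (hwnn n)
  · intro x
    rw [hGk]
    exact (hout.comp hFcont).continuousWithinAt
  · rw [hGk]
    have h := (hout.tendsto 0).comp hFbot
    have hval : (∑ n ∈ Finset.Icc kmin K, w n * hfun n k 0) = 0 :=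
      Finset.sum_eq_zero fun n _ => by rw [hfun_zero n k hk1, mul_zero]
    rw [hval] at h
    exact h
  · rw [hGk]
    have h := (hout.tendsto 1).comp hFtop
    have hval : (∑ n ∈ Finset.Icc kmin K, w n * hfun n k 1) = 1 := by
      rw [Finset.sum_congr rfl fun n hn => ?_, hwsum]
      rw [Finset.mem_Icc] at hn
      rw [hfun_one n k (le_trans hkkmin hn.1), mul_one]
    rw [hval] at h
    exact h
  · intro _ x
    rw [hGh, hGh]
    refine Finset.sum_le_sum fun n _ => ?_
    exact mul_le_mul_of_nonneg_left (hfun_succ_le n k (hF01 x)) (hwnn n)
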